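/- arXiv:2012.01310 — 4 statements merged into one kernel-verified Lean document; each statement's English description precedes it below -/
import Mathlib

section
/- Every finitely generated solvable torsion group is finite: if G is a finitely generated group that is solvable and in which every element has finite order, then G is finite. -/
lemma map_derivedSeries_commutator (G : Type*) [Group G] (n : ℕ) :
    (derivedSeries (commutator G) n).map (commutator G).subtype ≤ derivedSeries G (n + 1) := by
  induction n with
  | zero =>
    rw [derivedSeries_zero, ← MonoidHom.range_eq_map, Subgroup.range_subtype]
    rw [derivedSeries_succ, derivedSeries_zero, ← commutator_def]
  | succ n ih =>
    rw [derivedSeries_succ, Subgroup.map_commutator, derivedSeries_succ]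
    exact Subgroup.commutator_mono ih ih

universe u

lemma aux_fg_torsion_finite : ∀ (n : ℕ) (G : Type u) [Group G] [Group.FG G],
    (∀ g : G, IsOfFinOrder g) → derivedSeries G n = ⊥ → Finite G := by
  intro n
  induction n with
  | zero =>
    intro G _ _ _ h
    rw [derivedSeries_zero] at h
    have : Subsingleton G := by
      constructor
      intro a b
      have ha : a ∈ (⊥ : Subgroup G) := h ▸ Subgroup.mem_top a
      have hb : b ∈ (⊥ : Subgroup G) := h ▸ Subgroup.mem_top b
      rw [Subgroup.mem_bot] at ha hb
      rw [ha, hb]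
    exact Finite.of_subsingleton
  | succ n ih =>
    intro G _ _ hG h
    have htor : Monoid.IsTorsion (Abelianization G) := fun g => by
      obtain ⟨x, rfl⟩ := QuotientGroup.mk_surjective g
      exact (Abelianization.of (G := G)).isOfFinOrder (hG x)
    have : Group.FG (Abelianization G) :=
      Group.fg_of_surjective (f := Abelianization.of (G := G)) QuotientGroup.mk_surjective
    have hfinab : Finite (Abelianization G) := CommGroup.finite_of_fg_torsion _ htor
    have hfinq : Finite (G ⧸ commutator G) := hfinab
    have : (commutator G).FiniteIndex := Subgroup.finiteIndex_of_finite_quotient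
    have : Group.FG (commutator G) := Subgroup.fg_of_index_ne_zero _
    have hbot : derivedSeries (commutator G) n = ⊥ := by
      have := (map_derivedSeries_commutator G n).trans_eq h
      rwa [le_bot_iff, Subgroup.map_eq_bot_iff_of_injective _ (commutator G).subtype_injective]
        at this
    have hfinH : Finite (commutator G) := ih (commutator G) (fun g => by
      exact Submonoid.isOfFinOrder_coe.mp (hG (g : G))) hbot
    exact Finite.of_equiv _ (Subgroup.groupEquivQuotientProdSubgroup (s := commutator G)).symm

/-- Every finitely generated solvable torsion group is finite. -/
theorem fg_solvable_torsion_group_finite (G : Type*) [Group G] [Group.FG G]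
    [Group.IsSolvable G] (hG : ∀ g : G, IsOfFinOrder g) : Finite G := by
  obtain ⟨n, hn⟩ := (Group.isSolvable_def G).mp ‹_›
  exact aux_fg_torsion_finite n G hG hn
end

section
/- Every finitely generated, torsion, virtually solvable group is finite: if G is a finitely generated group in which every element has finite order, and G has a solvable subgroup of finite index, then G is finite. -/
open Subgroup

private lemma map_derivedSeries_commutator_le (G : Type*) [Group G] (m : ℕ) :
    (derivedSeries (commutator G) m).map (commutator G).subtype ≤ derivedSeries G (m + 1) := by
  induction m with
  | zero =>
    rw [derivedSeries_zero, ← MonoidHom.range_eq_map, Subgroup.range_subtype]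
    exact (derivedSeries_one G).ge
  | succ m ih =>
    rw [derivedSeries_succ, Subgroup.map_commutator, derivedSeries_succ]
    exact Subgroup.commutator_mono ih ih

private lemma fg_torsion_solvable_aux : ∀ (n : ℕ) (G : Type*) [Group G] [Group.FG G],
    (∀ g : G, IsOfFinOrder g) → derivedSeries G n = ⊥ → Finite G := by
  intro n
  induction n with
  | zero =>
    intro G _ _ _ hbot
    rw [derivedSeries_zero] at hbot
    have : Subsingleton G := by
      constructor
      intro a b
      have ha : a ∈ (⊥ : Subgroup G) := hbot ▸ Subgroup.mem_top a
      have hb : b ∈ (⊥ : Subgroup G) := hbot ▸ Subgroup.mem_top b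
      rw [Subgroup.mem_bot] at ha hb
      rw [ha, hb]
    exact Finite.of_subsingleton
  | succ n ih =>
    intro G _ _ htors hbot
    -- The abelianization is fg, torsion, abelian, hence finite
    have habtors : ∀ g : Abelianization G, IsOfFinOrder g := by
      intro g
      obtain ⟨x, rfl⟩ := QuotientGroup.mk'_surjective (commutator G) g
      exact (QuotientGroup.mk' (commutator G)).isOfFinOrder (htors x)
    have hfgab : Group.FG (Abelianization G) :=
      Group.fg_of_surjective (f := QuotientGroup.mk' (commutator G))
        (QuotientGroup.mk'_surjective _)
    have hfinab : Finite (Abelianization G) :=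
      CommGroup.finite_of_fg_torsion _ habtors
    -- hence commutator G has finite index
    have : Finite (G ⧸ commutator G) := hfinab
    have hfi : (commutator G).FiniteIndex := Subgroup.finiteIndex_of_finite_quotient
    have hfg : Group.FG (commutator G) := Subgroup.fg_of_index_ne_zero _
    -- derived series of commutator G terminates at n
    have hbot' : derivedSeries (commutator G) n = ⊥ := by
      have hle := map_derivedSeries_commutator_le G n
      rw [hbot, le_bot_iff, Subgroup.map_eq_bot_iff_of_injective _
        (commutator G).subtype_injective] at hle
      exact hle
    have hK : Finite (commutator G) :=
      ih (commutator G) (fun g => Submonoid.isOfFinOrder_coe.1 (htors (g : G))) hbot'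
    exact Finite.of_equiv _ (Subgroup.groupEquivQuotientProdSubgroup (s := commutator G)).symm

/-- Every finitely generated, torsion, virtually solvable group is finite. -/
theorem fg_torsion_virtually_solvable_group_finite (G : Type*) [Group G] [Group.FG G]
    (hG : ∀ g : G, IsOfFinOrder g)
    (hvs : ∃ K : Subgroup G, K.FiniteIndex ∧ IsSolvable K) : Finite G := by
  obtain ⟨K, hKfi, hKsolv⟩ := hvs
  haveI := hKfi
  haveI : Group.FG K := Subgroup.fg_of_index_ne_zero _
  obtain ⟨n, hn⟩ := hKsolv.solvable
  have hKfin : Finite K :=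
    fg_torsion_solvable_aux n K (fun g => Submonoid.isOfFinOrder_coe.1 (hG (g : G))) hn
  exact Finite.of_equiv _ (Subgroup.groupEquivQuotientProdSubgroup (s := K)).symm
end

section
/- Every solvable normal subgroup of a nonabelian free group is trivial: if N is a normal subgroup of the free group on two generators and N is solvable, then N is the trivial subgroup. -/
open FreeGroup List
open scoped commutatorElement

namespace SolvAux

variable {α : Type*} [DecidableEq α]

lemma invRev_cons (x : α × Bool) (L : List (α × Bool)) :
    invRev (x :: L) = invRev L ++ [(x.1, !x.2)] := by
  simp [invRev]

lemma invRev_concat (x : α × Bool) (L : List (α × Bool)) :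
    invRev (L ++ [x]) = (x.1, !x.2) :: invRev L := by
  simp [invRev]

lemma reduce_tail {x : α × Bool} {L : List (α × Bool)} (h : reduce (x :: L) = x :: L) :
    reduce L = L := by
  have h1 : Red (x :: L) (x :: reduce L) := Red.cons_cons reduce.red
  rw [← h] at h1
  have := reduce.min h1
  rw [h] at this
  exact (List.cons.injEq _ _ _ _ ▸ this).2.symm

lemma reduce_init {x : α × Bool} {L : List (α × Bool)}
    (h : reduce (L ++ [x]) = L ++ [x]) : reduce L = L := by
  have h1 : reduce (invRev (L ++ [x])) = invRev (L ++ [x]) := by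
    rw [reduce_invRev, h]
  rw [invRev_concat] at h1
  have h2 := reduce_tail h1
  have h3 : reduce (invRev (invRev L)) = invRev (invRev L) := by
    rw [reduce_invRev, h2]
  rwa [invRev_invRev] at h3

lemma reduce_cons_of_ne {x y : α × Bool} {tl : List (α × Bool)}
    (h : reduce (y :: tl) = y :: tl) (hne : ¬(x.1 = y.1 ∧ x.2 = !y.2)) :
    reduce (x :: y :: tl) = x :: y :: tl := by
  rw [reduce.cons, h]
  simp [hne]

end SolvAux

namespace SolvAux2
open SolvAux

variable {α : Type*} [DecidableEq α]

lemma peel_head {u : FreeGroup α} {p : α × Bool} {L : List (α × Bool)}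
    (h : u.toWord = p :: L) :
    ∃ u' : FreeGroup α, u'.toWord = L ∧ u = mk [p] * u' := by
  refine ⟨mk L, ?_, ?_⟩
  · rw [toWord_mk]
    exact reduce_tail (h ▸ reduce_toWord u)
  · have h2 := mk_toWord (x := u)
    rw [h] at h2
    rw [mul_mk]
    exact h2.symm

lemma peel_last {u : FreeGroup α} {p : α × Bool} {L : List (α × Bool)}
    (h : u.toWord = L ++ [p]) :
    ∃ u' : FreeGroup α, u'.toWord = L ∧ u = u' * mk [p] := by
  refine ⟨mk L, ?_, ?_⟩
  · rw [toWord_mk]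
    exact reduce_init (h ▸ reduce_toWord u)
  · have h2 := mk_toWord (x := u)
    rw [h] at h2
    rw [mul_mk]
    exact h2.symm

lemma mk_single (i : α) (b : Bool) :
    (mk [(i, b)] : FreeGroup α) = of i ^ (cond b 1 (-1) : ℤ) := by
  cases b
  · show (mk [(i, false)] : FreeGroup α) = of i ^ (-1 : ℤ)
    rw [zpow_neg, zpow_one]
    show (mk [(i, false)] : FreeGroup α) = (mk [(i, true)])⁻¹
    rw [inv_mk]
    congr 1
  · show (mk [(i, true)] : FreeGroup α) = of i ^ (1 : ℤ)
    rw [zpow_one]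
    rfl

lemma commute_zpow_aux (i : α) (ε : ℤ) :
    (of i : FreeGroup α) ^ ε * of i ^ (2 : ℕ) = of i ^ (2 : ℕ) * of i ^ ε :=
  (((Commute.refl (of i)).pow_right 2).zpow_left ε).eq

lemma eq_zpow_of_commute_sq_aux (i : α) :
    ∀ (n : ℕ) (u : FreeGroup α), u.toWord.length = n →
      u * of i ^ (2 : ℕ) = of i ^ (2 : ℕ) * u → ∃ m : ℤ, u = of i ^ m := by
  intro n
  induction n using Nat.strong_induction_on with
  | _ n ih =>
  intro u hn hc
  rcases h : u.toWord with _ | ⟨p, L⟩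
  · exact ⟨0, by rw [zpow_zero, ← toWord_eq_nil_iff, h]⟩
  · by_cases hp : p.1 = i
    · -- peel the first letter
      obtain ⟨u', hu't, hu'⟩ := peel_head h
      have hpp : p = (i, p.2) := by rw [← hp]
      have hmk : mk [p] = (of i : FreeGroup α) ^ (cond p.2 1 (-1) : ℤ) := by
        rw [hpp]; exact mk_single i p.2
      set ε : ℤ := (cond p.2 1 (-1) : ℤ) with hε
      rw [hmk] at hu'
      have hc' : u' * of i ^ (2 : ℕ) = of i ^ (2 : ℕ) * u' := by
        apply mul_left_cancel (a := (of i : FreeGroup α) ^ ε)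
        calc (of i : FreeGroup α) ^ ε * (u' * of i ^ (2:ℕ))
            = (of i ^ ε * u') * of i ^ (2:ℕ) := by rw [mul_assoc]
          _ = of i ^ (2:ℕ) * (of i ^ ε * u') := by rw [← hu', hc, hu']
          _ = (of i ^ (2:ℕ) * of i ^ ε) * u' := by rw [mul_assoc]
          _ = (of i ^ ε * of i ^ (2:ℕ)) * u' := by rw [commute_zpow_aux]
          _ = of i ^ ε * (of i ^ (2:ℕ) * u') := by rw [mul_assoc]
      have h1 : u'.toWord.length = L.length := by rw [hu't]
      have h2 : n = L.length + 1 := by rw [← hn, h]; simp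
      obtain ⟨m, hm⟩ := ih L.length (by omega) u' h1 hc'
      exact ⟨ε + m, by rw [hu', hm, zpow_add]⟩
    · have hne : (p :: L) ≠ [] := List.cons_ne_nil p L
      by_cases hq : ((p :: L).getLast hne).1 = i
      · -- peel the last letter
        set q := (p :: L).getLast hne with hqdef
        have hdec : u.toWord = (p :: L).dropLast ++ [q] := by
          rw [h]; exact (List.dropLast_append_getLast hne).symm
        obtain ⟨u', hu't, hu'⟩ := peel_last hdec
        have hqq : q = (i, q.2) := by rw [← hq]
        have hmk : mk [q] = (of i : FreeGroup α) ^ (cond q.2 1 (-1) : ℤ) := by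
          rw [hqq]; exact mk_single i q.2
        set ε : ℤ := (cond q.2 1 (-1) : ℤ) with hε
        rw [hmk] at hu'
        have hc' : u' * of i ^ (2 : ℕ) = of i ^ (2 : ℕ) * u' := by
          apply mul_right_cancel (b := (of i : FreeGroup α) ^ ε)
          calc (u' * of i ^ (2:ℕ)) * of i ^ ε
              = u' * (of i ^ (2:ℕ) * of i ^ ε) := by rw [mul_assoc]
            _ = u' * (of i ^ ε * of i ^ (2:ℕ)) := by rw [commute_zpow_aux]
            _ = (u' * of i ^ ε) * of i ^ (2:ℕ) := by rw [mul_assoc]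
            _ = of i ^ (2:ℕ) * (u' * of i ^ ε) := by rw [← hu', hc]
            _ = (of i ^ (2:ℕ) * u') * of i ^ ε := by rw [mul_assoc]
        have h1 : u'.toWord.length = L.length := by
          rw [hu't]; simp
        have h2 : n = L.length + 1 := by rw [← hn, h]; simp
        obtain ⟨m, hm⟩ := ih L.length (by omega) u' h1 hc'
        exact ⟨m + ε, by rw [hu', hm, zpow_add]⟩
      · -- contradiction: both ends avoid the letter i
        exfalso
        set q := (p :: L).getLast hne with hqdef
        set M' := (p :: L).dropLast with hM'def
        have hdec : p :: L = M' ++ [q] := (List.dropLast_append_getLast hne).symm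
        have hred : reduce (p :: L) = p :: L := h ▸ reduce_toWord u
        have hof2 : (of i : FreeGroup α) ^ (2:ℕ) = mk [(i, true), (i, true)] := by
          rw [pow_two]
          show mk [(i, true)] * mk [(i, true)] = _
          rw [mul_mk]
          rfl
        have hX : (u * of i ^ (2:ℕ)).toWord = (i, true) :: (i, true) :: p :: L := by
          rw [hc]
          have h2 : (of i : FreeGroup α) ^ (2:ℕ) * u
              = mk ((i, true) :: (i, true) :: p :: L) := by
            rw [hof2]
            conv_rhs => rw [show (i, true) :: (i, true) :: p :: L
              = [(i, true), (i, true)] ++ (p :: L) from rfl]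
            rw [← mul_mk, ← h, mk_toWord]
          rw [h2, toWord_mk]
          apply reduce_cons_of_ne
          apply reduce_cons_of_ne hred
          · rintro ⟨h1, -⟩; exact hp h1.symm
          · rintro ⟨-, h2⟩; simp at h2
        have hrevred : reduce (invRev (p :: L)) = invRev (p :: L) := by
          rw [reduce_invRev, hred]
        have hXi : ((u * of i ^ (2:ℕ))⁻¹).toWord
            = (i, false) :: (i, false) :: (q.1, !q.2) :: invRev M' := by
          have h2 : (u * of i ^ (2:ℕ))⁻¹
              = mk ((i, false) :: (i, false) :: (q.1, !q.2) :: invRev M') := by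
            rw [mul_inv_rev]
            have e1 : ((of i : FreeGroup α) ^ (2:ℕ))⁻¹ = mk [(i, false), (i, false)] := by
              rw [hof2, inv_mk]
              congr 1
            have e2 : u⁻¹ = mk ((q.1, !q.2) :: invRev M') := by
              conv_lhs => rw [← mk_toWord (x := u), h]
              rw [inv_mk]
              congr 1
              rw [hdec, invRev_concat]
            rw [e1, e2, mul_mk]
            rfl
          rw [h2, toWord_mk]
          have hrr : reduce ((q.1, !q.2) :: invRev M') = (q.1, !q.2) :: invRev M' := by
            have h3 := hrevred
            rw [hdec, invRev_concat] at h3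
            exact h3
          apply reduce_cons_of_ne
          apply reduce_cons_of_ne hrr
          · rintro ⟨h1, -⟩; exact hq h1.symm
          · rintro ⟨-, h2⟩; simp at h2
        rw [toWord_inv, hX, hdec] at hXi
        rw [invRev_cons, invRev_cons, invRev_concat] at hXi
        simp only [List.cons_append] at hXi
        have h4 := (List.cons.injEq _ _ _ _ ▸ hXi).1
        exact hq (congrArg Prod.fst h4)

lemma eq_zpow_of_commute_sq (i : α) (u : FreeGroup α)
    (hc : u * of i ^ (2 : ℕ) = of i ^ (2 : ℕ) * u) : ∃ m : ℤ, u = of i ^ m :=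
  eq_zpow_of_commute_sq_aux i u.toWord.length u rfl hc

end SolvAux2


namespace SolvAux3
open SolvAux SolvAux2 FreeGroup

lemma freeGroup_of_mul_of_ne {β : Type*} {s t : β} (hst : s ≠ t) :
    FreeGroup.of s * FreeGroup.of t ≠ FreeGroup.of t * FreeGroup.of s := by
  classical
  intro hcomm
  have key : ∀ a b : β, a ≠ b →
      (FreeGroup.of a * FreeGroup.of b).toWord = [(a, true), (b, true)] := by
    intro a b hab
    have : (FreeGroup.of a * FreeGroup.of b) = mk [(a, true), (b, true)] := by
      show mk [(a, true)] * mk [(b, true)] = _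
      rw [mul_mk]
      rfl
    rw [this, toWord_mk]
    apply reduce_cons_of_ne (reduce_singleton _)
    rintro ⟨h1, -⟩; exact hab h1
  have h1 := key s t hst
  have h2 := key t s hst.symm
  rw [hcomm, h2] at h1
  injection h1 with h3 _
  exact hst (congrArg Prod.fst h3).symm

lemma freeGroup_eq_one_of_isEmpty {β : Type*} [IsEmpty β] (w : FreeGroup β) : w = 1 := by
  classical
  rw [← toWord_eq_nil_iff]
  cases hw : w.toWord with
  | nil => rfl
  | cons a _ => exact isEmptyElim a.1

lemma abelian_normal_eq_bot (A : Subgroup (FreeGroup (Fin 2))) (hA : A.Normal)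
    (habel : ∀ x y : A, x * y = y * x) : A = ⊥ := by
  classical
  by_contra hbot
  set S := IsFreeGroup.Generators A with hS
  have key : ∀ r : S, IsFreeGroup.toFreeGroup A (IsFreeGroup.of r) = FreeGroup.of r := by
    intro r
    show (IsFreeGroup.mulEquiv A).symm ((IsFreeGroup.mulEquiv A).toFun (FreeGroup.of r))
        = FreeGroup.of r
    exact (IsFreeGroup.mulEquiv A).symm_apply_apply _
  have hsub : Subsingleton S := by
    constructor
    intro s t
    by_contra hst
    have h1 : IsFreeGroup.of (G := A) s * IsFreeGroup.of t
        = IsFreeGroup.of t * IsFreeGroup.of s := habel _ _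
    have h2 := congrArg (IsFreeGroup.toFreeGroup A) h1
    rw [_root_.map_mul, _root_.map_mul, key, key] at h2
    exact freeGroup_of_mul_of_ne hst h2
  have hne : Nonempty S := by
    by_contra hemp
    rw [not_nonempty_iff] at hemp
    apply hbot
    rw [Subgroup.eq_bot_iff_forall]
    intro x hx
    have h3 : (⟨x, hx⟩ : A) = 1 := by
      apply (IsFreeGroup.toFreeGroup A).injective
      rw [_root_.map_one]
      exact freeGroup_eq_one_of_isEmpty _
    exact congrArg Subtype.val h3
  obtain ⟨s0⟩ := hne
  set e := IsFreeGroup.toFreeGroup A with he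
  have hcyc : ∀ w : FreeGroup S, ∃ k : ℤ, w = FreeGroup.of s0 ^ k := by
    intro w
    refine FreeGroup.induction_on w ⟨0, by simp⟩ (fun x => ?_) (fun x _ => ?_)
      (fun x y hx hy => ?_)
    · exact ⟨1, by rw [Subsingleton.elim x s0, zpow_one]⟩
    · obtain ⟨k, hk⟩ : ∃ k : ℤ, (pure x : FreeGroup S) = FreeGroup.of s0 ^ k :=
        ⟨1, by rw [Subsingleton.elim x s0, zpow_one]; rfl⟩
      exact ⟨-k, by rw [zpow_neg]; exact congrArg (·⁻¹) hk⟩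
    · obtain ⟨k, hk⟩ := hx
      obtain ⟨l, hl⟩ := hy
      exact ⟨k + l, by rw [hk, hl, zpow_add]⟩
  have hinj : ∀ k l : ℤ, (FreeGroup.of s0 : FreeGroup S) ^ k = FreeGroup.of s0 ^ l → k = l := by
    intro k l hkl
    have h4 := congrArg (FreeGroup.lift (fun _ : S => Multiplicative.ofAdd (1 : ℤ))) hkl
    rw [map_zpow, map_zpow, FreeGroup.lift_apply_of] at h4
    have h5 := congrArg Multiplicative.toAdd h4
    rw [toAdd_zpow, toAdd_zpow] at h5
    simpa using h5
  set z' : A := e.symm (FreeGroup.of s0) with hz'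
  have hz'pow : ∀ x : A, ∃ k : ℤ, x = z' ^ k := by
    intro x
    obtain ⟨k, hk⟩ := hcyc (e x)
    refine ⟨k, ?_⟩
    have h6 := congrArg e.symm hk
    rw [e.symm_apply_apply, map_zpow] at h6
    exact h6
  have hz'inj : ∀ k l : ℤ, z' ^ k = z' ^ l → k = l := by
    intro k l hkl
    apply hinj
    have h7 := congrArg e hkl
    rw [map_zpow, map_zpow, e.apply_symm_apply] at h7
    exact h7
  set z : FreeGroup (Fin 2) := (z' : FreeGroup (Fin 2)) with hz
  have hzA : z ∈ A := z'.2
  have hz1 : z ≠ 1 := by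
    intro h8
    have h9 : z' = 1 := Subtype.ext h8
    have h10 := congrArg e h9
    rw [_root_.map_one, e.apply_symm_apply] at h10
    exact FreeGroup.of_ne_one s0 h10
  have hconj : ∀ g : FreeGroup (Fin 2), ∃ k : ℤ, g * z * g⁻¹ = z ^ k := by
    intro g
    have hmem : g * z * g⁻¹ ∈ A := hA.conj_mem z hzA g
    obtain ⟨k, hk⟩ := hz'pow ⟨_, hmem⟩
    refine ⟨k, ?_⟩
    have h11 := congrArg Subtype.val hk
    simpa using h11
  have hsq : ∀ g : FreeGroup (Fin 2), z * g ^ 2 = g ^ 2 * z := by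
    intro g
    obtain ⟨k, hk⟩ := hconj g
    obtain ⟨l, hl⟩ := hconj g⁻¹
    rw [inv_inv] at hl
    have hzkl : z = z ^ (k * l) := by
      calc z = g * (g⁻¹ * z * g) * g⁻¹ := by group
        _ = g * z ^ l * g⁻¹ := by rw [hl]
        _ = (g * z * g⁻¹) ^ l := by rw [conj_zpow]
        _ = (z ^ k) ^ l := by rw [hk]
        _ = z ^ (k * l) := by rw [← zpow_mul]
    have h12 : z' ^ (k * l) = z' ^ (1 : ℤ) := by
      apply Subtype.coe_injective
      push_cast
      rw [zpow_one, ← hzkl]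
    have hkl : k * l = 1 := hz'inj _ _ h12
    have hk1 : k = 1 ∨ k = -1 := Int.isUnit_iff.mp (IsUnit.of_mul_eq_one l hkl)
    have hfix : g * (g * z * g⁻¹) * g⁻¹ = z := by
      rcases hk1 with h | h
      · rw [hk, h, zpow_one, hk, h, zpow_one]
      · rw [hk, h]
        calc g * z ^ (-1 : ℤ) * g⁻¹ = (g * z * g⁻¹)⁻¹ := by group
          _ = (z ^ (-1 : ℤ))⁻¹ := by rw [hk, h]
          _ = z := by group
    have h13 : g ^ 2 * z = (g * (g * z * g⁻¹) * g⁻¹) * g ^ 2 := by rw [pow_two]; group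
    rw [hfix] at h13
    exact h13.symm
  obtain ⟨m, hm0⟩ := eq_zpow_of_commute_sq (0 : Fin 2) z (hsq (FreeGroup.of 0))
  obtain ⟨mm, hm1⟩ := eq_zpow_of_commute_sq (1 : Fin 2) z (hsq (FreeGroup.of 1))
  set φ := FreeGroup.lift (fun j : Fin 2 => if j = 0 then Multiplicative.ofAdd (1 : ℤ) else 1)
    with hφ
  have e0 : φ z = Multiplicative.ofAdd (1 : ℤ) ^ m := by
    rw [hm0, map_zpow, FreeGroup.lift_apply_of]
    simp
  have e1 : φ z = 1 := by
    rw [hm1, map_zpow, FreeGroup.lift_apply_of]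
    simp
  rw [e1] at e0
  have hm00 : m = 0 := by
    have h14 := congrArg Multiplicative.toAdd e0.symm
    rw [toAdd_zpow] at h14
    simpa using h14
  rw [hm00, zpow_zero] at hm0
  exact hz1 hm0

end SolvAux3

/-- Every solvable normal subgroup of a nonabelian free group is trivial: a normal,
solvable subgroup of the free group on two generators is the trivial subgroup. -/
theorem solvable_normal_subgroup_of_free_group_trivial
    (N : Subgroup (FreeGroup (Fin 2))) (hN : N.Normal) (hs : IsSolvable N) :
    N = ⊥ := by
  classical
  by_contra hbot
  obtain ⟨kk, hkk⟩ := hs.solvable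
  have hP : ∃ n, derivedSeries N n = ⊥ := ⟨kk, hkk⟩
  have hn0 : Nat.find hP ≠ 0 := by
    intro h0
    have h1 := Nat.find_spec hP
    rw [h0, derivedSeries_zero] at h1
    haveI : Nontrivial N := (Subgroup.nontrivial_iff_ne_bot N).mpr hbot
    exact top_ne_bot h1
  obtain ⟨m, hm⟩ := Nat.exists_eq_succ_of_ne_zero hn0
  have hDbot : derivedSeries N (m + 1) = ⊥ := by
    have h1 := Nat.find_spec hP
    rw [hm] at h1
    exact h1
  have hDne : derivedSeries N m ≠ ⊥ := Nat.find_min hP (by omega)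
  set A := Subgroup.map N.subtype (derivedSeries N m) with hAdef
  have hnorm : ∀ j : ℕ, (Subgroup.map N.subtype (derivedSeries N j)).Normal := by
    intro j
    induction j with
    | zero =>
      rw [derivedSeries_zero, ← MonoidHom.range_eq_map, Subgroup.range_subtype]
      exact hN
    | succ j ihj =>
      rw [derivedSeries_succ, Subgroup.map_commutator]
      exact @Subgroup.commutator_normal _ _ _ _ ihj ihj
  have hAabel : ∀ x y : A, x * y = y * x := by
    rintro ⟨x, hx⟩ ⟨y, hy⟩
    obtain ⟨dx, hdx, hdxe⟩ := hx
    obtain ⟨dy, hdy, hdye⟩ := hy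
    have hcomm : ⁅dx, dy⁆ ∈ derivedSeries N (m + 1) := by
      rw [derivedSeries_succ]
      exact Subgroup.commutator_mem_commutator hdx hdy
    rw [hDbot, Subgroup.mem_bot, commutatorElement_eq_one_iff_mul_comm] at hcomm
    have hval : x * y = y * x := by
      rw [← hdxe, ← hdye]
      have := congrArg N.subtype hcomm
      simpa using this
    exact Subtype.ext hval
  have hAne : A ≠ ⊥ := by
    intro h2
    exact hDne ((Subgroup.map_eq_bot_iff_of_injective
      (H := derivedSeries N m) (f := N.subtype) (Subgroup.subtype_injective N)).mp h2)
  exact hAne (SolvAux3.abelian_normal_eq_bot A (hnorm m) hAabel)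
end

section
/- Let f : H → G be a surjective group homomorphism with solvable kernel. Then H contains a nonabelian free subgroup if and only if G contains a nonabelian free subgroup. -/
-- retraction: distinct generators give injective F2 -> FreeGroup S
lemma FG_pair_injective {S : Type*} [DecidableEq S] {s t : S} (hst : s ≠ t) :
    Function.Injective (FreeGroup.lift ![FreeGroup.of s, FreeGroup.of t] :
      FreeGroup (Fin 2) →* FreeGroup S) := by
  set ι : FreeGroup (Fin 2) →* FreeGroup S := FreeGroup.lift ![FreeGroup.of s, FreeGroup.of t]
  set r : FreeGroup S →* FreeGroup (Fin 2) :=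
    FreeGroup.lift (fun x => if x = s then FreeGroup.of 0 else
      if x = t then FreeGroup.of 1 else 1)
  have hcomp : r.comp ι = MonoidHom.id _ := by
    apply FreeGroup.ext_hom
    intro a
    fin_cases a <;> simp [ι, r, hst.symm]
  intro x y hxy
  have := congrArg r hxy
  calc x = (r.comp ι) x := by rw [hcomp]; rfl
    _ = (r.comp ι) y := this
    _ = y := by rw [hcomp]; rfl

-- generators have infinite order
lemma FG_of_zpow_eq_one {S : Type*} {s : S} {k : ℤ} (h : FreeGroup.of s ^ k = 1) : k = 0 := by
  have := congrArg (FreeGroup.lift (fun _ : S => Multiplicative.ofAdd (1 : ℤ))) h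
  simp only [map_zpow, FreeGroup.lift_apply_of, map_one] at this
  have h2 := congrArg Multiplicative.toAdd this
  simpa using h2

-- subsingleton: every element is a power of a generator
lemma FG_subsingleton_zpow {S : Type*} [Subsingleton S] (s : S) (w : FreeGroup S) :
    ∃ n : ℤ, w = FreeGroup.of s ^ n := by
  induction w using FreeGroup.induction_on with
  | C1 => exact ⟨0, by simp⟩
  | of t => exact ⟨1, by rw [Subsingleton.elim t s, zpow_one]⟩
  | inv_of t ih => obtain ⟨n, hn⟩ := ih; exact ⟨-n, by rw [hn, zpow_neg]⟩
  | mul a b iha ihb =>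
      obtain ⟨n, hn⟩ := iha; obtain ⟨m, hm⟩ := ihb
      exact ⟨n + m, by rw [hn, hm, zpow_add]⟩

lemma FG_empty_eq_one {S : Type*} [IsEmpty S] (w : FreeGroup S) : w = 1 := by
  induction w using FreeGroup.induction_on with
  | C1 => rfl
  | of t => exact IsEmpty.elim ‹_› t
  | inv_of t ih => rw [ih, inv_one]
  | mul a b iha ihb => rw [iha, ihb, one_mul]

lemma FG2_not_solvable : ¬ IsSolvable (FreeGroup (Fin 2)) := by
  intro h
  have hcyc : (Equiv.Perm.IsCycle (finRotate 5)) := isCycle_finRotate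
  have hsupp : Equiv.Perm.support (finRotate 5) = Finset.univ := support_finRotate
  have hclos := Equiv.Perm.closure_cycle_adjacent_swap hcyc hsupp 0
  set φ : FreeGroup (Fin 2) →* Equiv.Perm (Fin 5) :=
    FreeGroup.lift ![finRotate 5, Equiv.swap 0 (finRotate 5 0)]
  have hrange : φ.range = ⊤ := by
    rw [FreeGroup.range_lift_eq_closure, ← hclos]
    congr 1
    ext x
    simp [Fin.exists_fin_two]; tauto
  have hsurj : Function.Surjective φ := MonoidHom.range_eq_top.mp hrange
  haveI : Group.IsSolvable (FreeGroup (Fin 2)) := h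
  exact Equiv.Perm.fin_5_not_solvable (solvable_of_surjective hsurj)

-- solvable subgroup of free group is cyclic
lemma solvable_subgroup_cyclic (K : Subgroup (FreeGroup (Fin 2))) (hs : IsSolvable K) :
    ∃ u : FreeGroup (Fin 2), K = Subgroup.zpowers u ∧
      (u = 1 ∨ ∀ k : ℤ, u ^ k = 1 → k = 0) := by
  classical
  let e : K ≃* FreeGroup (IsFreeGroup.Generators K) := IsFreeGroup.toFreeGroup K
  have hsub : Subsingleton (IsFreeGroup.Generators K) := by
    by_contra hns
    rw [not_subsingleton_iff_nontrivial] at hns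
    obtain ⟨s, t, hst⟩ := hns.exists_pair_ne
    haveI : Group.IsSolvable K := hs
    exact FG2_not_solvable (solvable_of_solvable_injective
      (f := e.symm.toMonoidHom.comp (FreeGroup.lift ![FreeGroup.of s, FreeGroup.of t]))
      (e.symm.injective.comp (FG_pair_injective hst)))
  rcases isEmpty_or_nonempty (IsFreeGroup.Generators K) with hemp | ⟨⟨s⟩⟩
  · refine ⟨1, ?_, Or.inl rfl⟩
    rw [Subgroup.zpowers_one_eq_bot]
    rw [Subgroup.eq_bot_iff_forall]
    intro x hx
    have : e ⟨x, hx⟩ = e 1 := by rw [map_one]; exact FG_empty_eq_one _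
    have := e.injective this
    exact congrArg Subtype.val this
  · refine ⟨(e.symm (FreeGroup.of s) : K), ?_, Or.inr ?_⟩
    · ext x
      rw [Subgroup.mem_zpowers_iff]
      constructor
      · intro hx
        obtain ⟨n, hn⟩ := FG_subsingleton_zpow s (e ⟨x, hx⟩)
        refine ⟨n, ?_⟩
        have : (⟨x, hx⟩ : K) = e.symm (FreeGroup.of s) ^ n := by
          rw [← map_zpow, ← hn]; exact (e.symm_apply_apply _).symm
        calc ((e.symm (FreeGroup.of s) : K) : FreeGroup (Fin 2)) ^ n
            = ((e.symm (FreeGroup.of s) ^ n : K) : FreeGroup (Fin 2)) := by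
              rw [SubgroupClass.coe_zpow]
          _ = x := by rw [← this]
      · rintro ⟨n, rfl⟩
        exact Subgroup.zpow_mem K (e.symm (FreeGroup.of s)).2 n
    · intro k hk
      have h1 : ((e.symm (FreeGroup.of s) ^ k : K) : FreeGroup (Fin 2)) = 1 := by
        rw [SubgroupClass.coe_zpow]; exact hk
      have h2 : (e.symm (FreeGroup.of s)) ^ k = 1 := Subtype.ext h1
      have h3 : FreeGroup.of s ^ k = (1 : FreeGroup (IsFreeGroup.Generators K)) := by
        have := congrArg e h2
        rwa [map_zpow, map_one, e.apply_symm_apply] at this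
      exact FG_of_zpow_eq_one h3

lemma closure_pair_solvable {Gr : Type*} [Group Gr] {x y : Gr} (h : x * y = y * x) :
    IsSolvable (Subgroup.closure ({x, y} : Set Gr)) := by
  apply isSolvable_of_comm
  rintro ⟨a, ha⟩ ⟨b, hb⟩
  rw [Subtype.ext_iff]
  show a * b = b * a
  induction ha, hb using Subgroup.closure_induction₂ with
  | mem p q hp hq =>
      rcases hp with rfl | hp <;> rcases hq with rfl | hq
      · rfl
      · rw [Set.mem_singleton_iff] at hq; subst hq; exact h
      · rw [Set.mem_singleton_iff] at hp; subst hp; exact h.symm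
      · rw [Set.mem_singleton_iff] at hp hq; subst hp; subst hq; rfl
  | one_left q hq => rw [one_mul, mul_one]
  | one_right q hq => rw [one_mul, mul_one]
  | mul_left p q r hp hq hr h1 h2 =>
      rw [mul_assoc, h2, ← mul_assoc, h1, mul_assoc]
  | mul_right p q r hp hq hr h1 h2 =>
      rw [← mul_assoc, h1, mul_assoc, h2, ← mul_assoc]
  | inv_left p q hp hq h1 => exact Commute.inv_left h1
  | inv_right p q hp hq h1 => exact Commute.inv_right h1

lemma solvable_normal_eq_bot (N : Subgroup (FreeGroup (Fin 2))) [hN : N.Normal]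
    (hs : IsSolvable N) : N = ⊥ := by
  obtain ⟨u, rfl, hd⟩ := solvable_subgroup_cyclic N hs
  rcases hd with rfl | hord
  · exact Subgroup.zpowers_one_eq_bot
  exfalso
  have hu : u ∈ Subgroup.zpowers u := Subgroup.mem_zpowers u
  -- squares commute with u
  have key : ∀ g : FreeGroup (Fin 2), g ^ 2 * u = u * g ^ 2 := by
    intro g
    obtain ⟨n, hn⟩ := Subgroup.mem_zpowers_iff.mp (hN.conj_mem u hu g)
    obtain ⟨m, hm⟩ := Subgroup.mem_zpowers_iff.mp (by
      have := hN.conj_mem u hu g⁻¹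
      rwa [inv_inv] at this)
    have hconj : ∀ (v w : FreeGroup (Fin 2)) (i : ℤ), (w⁻¹ * v * w) ^ i = w⁻¹ * v ^ i * w := by
      intro v w i
      simpa using conj_zpow (i := i) (a := w⁻¹) (b := v)
    have hmn : u ^ (m * n) = u := by
      rw [zpow_mul, hm, hconj, hn]
      group
    have h1 : u ^ (m * n - 1) = 1 := by
      rw [zpow_sub, hmn, zpow_one, mul_inv_cancel]
    have h2 : m * n = 1 := by have := hord _ h1; omega
    have hn1 : n = 1 ∨ n = -1 :=
      Int.isUnit_iff.mp (IsUnit.of_mul_eq_one m (by rw [mul_comm]; exact h2))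
    have e3 : (u ^ n) ^ n = g ^ 2 * u * (g ^ 2)⁻¹ := by
      conv_lhs => rw [hn, conj_zpow, hn]
      rw [pow_two]
      group
    have e4 : (u ^ n) ^ n = u := by rcases hn1 with rfl | rfl <;> simp
    have := e4 ▸ e3
    rw [eq_mul_inv_iff_mul_eq] at this
    exact this.symm
  -- projections to ℤ
  set a : FreeGroup (Fin 2) := FreeGroup.of 0 with ha
  set b : FreeGroup (Fin 2) := FreeGroup.of 1 with hb
  set π0 : FreeGroup (Fin 2) →* Multiplicative ℤ :=
    FreeGroup.lift ![Multiplicative.ofAdd 1, 1] with hπ0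
  set π1 : FreeGroup (Fin 2) →* Multiplicative ℤ :=
    FreeGroup.lift ![1, Multiplicative.ofAdd 1] with hπ1
  have pz : ∀ (π : FreeGroup (Fin 2) →* Multiplicative ℤ) (w : FreeGroup (Fin 2)) (k : ℤ),
      ((π (w ^ k)).toAdd) = k * (π w).toAdd := by
    intro π w k
    rw [map_zpow, toAdd_zpow, smul_eq_mul]
  have hπ0a : (π0 a).toAdd = 1 := by simp [hπ0, ha]
  have hπ1a : (π1 a).toAdd = 0 := by simp [hπ1, ha]
  have hπ0b : (π0 b).toAdd = 0 := by simp [hπ0, hb]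
  have hπ1b : (π1 b).toAdd = 1 := by simp [hπ1, hb]
  have hsq : ∀ (π : FreeGroup (Fin 2) →* Multiplicative ℤ) (g : FreeGroup (Fin 2)),
      ((π (g ^ 2)).toAdd) = 2 * (π g).toAdd := by
    intro π g
    have : (g : FreeGroup (Fin 2)) ^ (2 : ℤ) = g ^ 2 := by norm_cast
    rw [← this, pz]
  -- the subgroup generated by u and a^2
  obtain ⟨t, hta, -⟩ := solvable_subgroup_cyclic (Subgroup.closure {u, a ^ 2})
    (closure_pair_solvable (key a).symm)
  have hu_mem : u ∈ Subgroup.closure ({u, a ^ 2} : Set (FreeGroup (Fin 2))) :=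
    Subgroup.subset_closure (Set.mem_insert _ _)
  have ha2_mem : a ^ 2 ∈ Subgroup.closure ({u, a ^ 2} : Set (FreeGroup (Fin 2))) :=
    Subgroup.subset_closure (Set.mem_insert_of_mem _ rfl)
  rw [hta, Subgroup.mem_zpowers_iff] at hu_mem ha2_mem
  obtain ⟨l, hl⟩ := hu_mem
  obtain ⟨k, hk⟩ := ha2_mem
  -- the subgroup generated by u and b^2
  obtain ⟨t', htb, -⟩ := solvable_subgroup_cyclic (Subgroup.closure {u, b ^ 2})
    (closure_pair_solvable (key b).symm)
  have hu_mem' : u ∈ Subgroup.closure ({u, b ^ 2} : Set (FreeGroup (Fin 2))) :=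
    Subgroup.subset_closure (Set.mem_insert _ _)
  have hb2_mem : b ^ 2 ∈ Subgroup.closure ({u, b ^ 2} : Set (FreeGroup (Fin 2))) :=
    Subgroup.subset_closure (Set.mem_insert_of_mem _ rfl)
  rw [htb, Subgroup.mem_zpowers_iff] at hu_mem' hb2_mem
  obtain ⟨l', hl'⟩ := hu_mem'
  obtain ⟨k', hk'⟩ := hb2_mem
  -- compute
  have ek0 : k * (π0 t).toAdd = 2 := by
    have := congrArg (fun w => (π0 w).toAdd) hk
    simpa [pz, hsq, hπ0a] using this
  have ek1 : k * (π1 t).toAdd = 0 := by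
    have := congrArg (fun w => (π1 w).toAdd) hk
    simpa [pz, hsq, hπ1a] using this
  have ek0' : k' * (π0 t').toAdd = 0 := by
    have := congrArg (fun w => (π0 w).toAdd) hk'
    simpa [pz, hsq, hπ0b] using this
  have ek1' : k' * (π1 t').toAdd = 2 := by
    have := congrArg (fun w => (π1 w).toAdd) hk'
    simpa [pz, hsq, hπ1b] using this
  have el0 : l * (π0 t).toAdd = (π0 u).toAdd := by
    have := congrArg (fun w => (π0 w).toAdd) hl
    simpa [pz] using this
  have el0' : l' * (π0 t').toAdd = (π0 u).toAdd := by
    have := congrArg (fun w => (π0 w).toAdd) hl'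
    simpa [pz] using this
  -- from the b-side: π0 u = 0
  have hk'0 : k' ≠ 0 := by intro h; rw [h] at ek1'; omega
  have ht'0 : (π0 t').toAdd = 0 := by
    rcases mul_eq_zero.mp ek0' with h | h
    · exact absurd h hk'0
    · exact h
  have hu0 : (π0 u).toAdd = 0 := by rw [← el0', ht'0, mul_zero]
  -- from the a-side: l = 0
  have ht0 : (π0 t).toAdd ≠ 0 := by intro h; rw [h, mul_zero] at ek0; omega
  have hl0 : l = 0 := by
    rw [hu0] at el0
    rcases mul_eq_zero.mp el0 with h | h
    · exact h
    · exact absurd h ht0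
  rw [hl0, zpow_zero] at hl
  exact one_ne_zero (hord 1 (by rw [zpow_one, ← hl]))


/-- If `f : H →* G` is a surjective group homomorphism with solvable kernel, then
`H` contains a nonabelian free subgroup if and only if `G` does. -/
theorem nonabelian_free_subgroup_iff_of_surjective_solvable_kernel
    {H G : Type*} [Group H] [Group G] (f : H →* G)
    (hf : Function.Surjective f) (hker : IsSolvable f.ker) :
    (∃ x y : H, Function.Injective (FreeGroup.lift ![x, y] : FreeGroup (Fin 2) →* H)) ↔
      (∃ x y : G, Function.Injective (FreeGroup.lift ![x, y] : FreeGroup (Fin 2) →* G)) := by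
  constructor
  · rintro ⟨x, y, hxy⟩
    refine ⟨f x, f y, ?_⟩
    have hcomp : (FreeGroup.lift ![f x, f y] : FreeGroup (Fin 2) →* G) =
        f.comp (FreeGroup.lift ![x, y]) := by
      apply FreeGroup.ext_hom
      intro a
      fin_cases a <;> simp
    rw [hcomp]
    set ψ : FreeGroup (Fin 2) →* G := f.comp (FreeGroup.lift ![x, y]) with hψ
    have hkψ : IsSolvable ψ.ker := by
      have hmem : ∀ z : ψ.ker, (FreeGroup.lift ![x, y]) (z : FreeGroup (Fin 2)) ∈ f.ker := by
        rintro ⟨z, hz⟩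
        exact hz
      haveI : Group.IsSolvable f.ker := hker
      exact solvable_of_solvable_injective
        (f := MonoidHom.codRestrict
          ((FreeGroup.lift ![x, y]).comp ψ.ker.subtype) f.ker hmem)
        (fun p q hpq => Subtype.ext (hxy (by
          have := congrArg Subtype.val hpq
          exact this)))
    have hbot : ψ.ker = ⊥ := solvable_normal_eq_bot _ hkψ
    exact (MonoidHom.ker_eq_bot_iff ψ).mp hbot
  · rintro ⟨x, y, hxy⟩
    obtain ⟨x', hx'⟩ := hf x
    obtain ⟨y', hy'⟩ := hf y
    refine ⟨x', y', ?_⟩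
    have hcomp : (FreeGroup.lift ![x, y] : FreeGroup (Fin 2) →* G) =
        f.comp (FreeGroup.lift ![x', y']) := by
      apply FreeGroup.ext_hom
      intro a
      fin_cases a <;> simp [hx', hy']
    intro p q hpq
    apply hxy
    rw [hcomp]
    simp only [MonoidHom.comp_apply, hpq]
end
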